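/- Conversely, for any function a: ℤ → ℂ, the bilinear map φ on csv defined by φ_λ(L_i,L_j) = a_{i+j}λ³ and zero on all other pairs of basis generators (extended sesquilinearly) is a 2-cocycle on the loop Schrödinger–Virasoro Lie conformal algebra. -/
import Mathlib


open Polynomial

/-- Generators of the loop Schrödinger–Virasoro Lie conformal algebra csv. -/
inductive Gen : Type
  | L : ℤ → Gen
  | M : ℤ → Gen
  | Y : ℤ → Gen
  deriving DecidableEq

/-- The λ-bracket of generators of csv (λ evaluated at `l`, ∂ = `X`). -/
noncomputable def br (l : ℂ) : Gen → Gen → (Gen →₀ Polynomial ℂ)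
  | Gen.L i, Gen.L j => Finsupp.single (Gen.L (i + j)) (X + C (2 * l))
  | Gen.L i, Gen.M j => Finsupp.single (Gen.M (i + j)) (X + C l)
  | Gen.M i, Gen.L j => Finsupp.single (Gen.M (i + j)) (C l)
  | Gen.L i, Gen.Y j => Finsupp.single (Gen.Y (i + j)) (X + C ((3/2) * l))
  | Gen.Y i, Gen.L j => Finsupp.single (Gen.Y (i + j)) (C (1/2) * X + C ((3/2) * l))
  | Gen.Y i, Gen.Y j => Finsupp.single (Gen.M (i + j)) (X + C (2 * l))
  | _, _ => 0

/-- The bilinear map φ^a with φ^a_λ(L_i,L_j) = a_{i+j}λ³ (as a polynomial in λ)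
and zero on all other pairs of generators. -/
noncomputable def phiA (a : ℤ → ℂ) : Gen → Gen → Polynomial ℂ
  | Gen.L i, Gen.L j => C (a (i + j)) * X ^ 3
  | _, _ => 0

/-- For any a : ℤ → ℂ, the map φ^a is a 2-cocycle on csv: it is skew-symmetric
(φ_λ(x,y) = −φ_{−λ}(y,x)) and satisfies the cocycle Jacobi identity
φ_{λ+μ}([x λ y],z) = φ_λ(x,[y μ z]) − φ_μ(y,[x λ z]), where
φ_ν(p(∂)g, z) = p(−ν)φ_ν(g,z) and φ_ν(x, p(∂)g) = p(ν)φ_ν(x,g) by sesquilinearity. -/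
theorem stmt_11 (a : ℤ → ℂ) :
    (∀ (x y : Gen) (l : ℂ), (phiA a x y).eval l = -((phiA a y x).eval (-l)))
    ∧ (∀ (x y z : Gen) (l m : ℂ),
        ((br l x y).sum fun h p => p.eval (-(l + m)) * (phiA a h z).eval (l + m))
          = ((br m y z).sum fun h p => p.eval l * (phiA a x h).eval l)
            - ((br l x z).sum fun h p => p.eval m * (phiA a y h).eval m)) := by
  constructor
  · intro x y l
    cases x <;> cases y <;> simp [phiA] <;> ring
  · intro x y z l m
    cases x <;> cases y <;> cases z <;>
      simp [br, phiA, Finsupp.sum_single_index, -Finsupp.single_add, add_comm, add_left_comm] <;> ring
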